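/- If 0 < ησ² ≤ 1 for all singular values σ_{y,i} of Y, then the gradient descent iterates W^k = X V_y D_k U_yᵀ (with D_k diagonal with entries (1 − (1 − ησ_{y,i}²)^k)/σ_{y,i}) converge as k → ∞ to W^∞ = X Y⁺, where Y⁺ denotes the Moore–Penrose pseudoinverse of Y. -/

import Mathlib

open Matrix Filter

/-- **Convergence of gradient descent to `X Y⁺`.**
If `0 < η σᵢ² ≤ 1` for all singular values `σᵢ` of `Y = U_y Σ_y V_yᵀ`, the iterates
`W^k = X V_y D_k U_yᵀ` (with `D_k` diagonal with entries `(1 − (1 − η σᵢ²)^k)/σᵢ`)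
converge as `k → ∞` to `W^∞ = X Y⁺ = X V_y Σ_y⁻¹ U_yᵀ`. -/
theorem gradient_descent_converges_to_pseudoinverse
    (n N : ℕ) (η : ℝ)
    (X : Matrix (Fin n) (Fin N) ℝ)
    (Uy : Matrix (Fin n) (Fin N) ℝ) (Vy : Matrix (Fin N) (Fin N) ℝ)
    (σs : Fin N → ℝ) (hσ : ∀ i, 0 < σs i)
    (hη : ∀ i, 0 < η * σs i ^ 2 ∧ η * σs i ^ 2 ≤ 1) :
    Tendsto
      (fun k : ℕ =>
        X * Vy * Matrix.diagonal (fun i => (1 - (1 - η * σs i ^ 2) ^ k) / σs i) * Uyᵀ)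
      atTop
      (nhds (X * (Vy * Matrix.diagonal (fun i => (σs i)⁻¹) * Uyᵀ))) := by
  have hD : Tendsto
      (fun k : ℕ => Matrix.diagonal (fun i => (1 - (1 - η * σs i ^ 2) ^ k) / σs i))
      atTop (nhds (Matrix.diagonal (fun i => (σs i)⁻¹))) := by
    apply tendsto_pi_nhds.2
    intro i
    rw [tendsto_pi_nhds]
    intro j
    by_cases hij : i = j
    · subst hij
      simp only [Matrix.diagonal_apply_eq]
      have h0 : Tendsto (fun k : ℕ => (1 - η * σs i ^ 2) ^ k) atTop (nhds 0) := by
        apply tendsto_pow_atTop_nhds_zero_of_abs_lt_one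
        rw [abs_lt]
        constructor <;> nlinarith [(hη i).1, (hη i).2]
      have : Tendsto (fun k : ℕ => (1 - (1 - η * σs i ^ 2) ^ k) / σs i) atTop
          (nhds ((1 - 0) / σs i)) := ((tendsto_const_nhds.sub h0)).div_const _
      simpa using this
    · simp [Matrix.diagonal_apply_ne _ hij]
  have hc : Continuous (fun D : Matrix (Fin N) (Fin N) ℝ => X * Vy * D * Uyᵀ) :=
    (Continuous.matrix_mul (continuous_const.matrix_mul continuous_id) continuous_const)
  have := (hc.tendsto _).comp hD
  simpa [Function.comp_def, Matrix.mul_assoc] using this
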